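/- On the Lie algebra h₆ with structure equations de⁵ = e¹∧e², de⁶ = e¹∧e³ (all other de^i = 0), every 2-form of the shape Ω = a e²∧e³ + b e¹∧e⁴ + c(e¹∧e²-e³∧e⁴) - k(e¹∧e³+e²∧e⁴) + ℓ(e²∧e⁵+e³∧e⁶) with a,b,c,k,ℓ ∈ ℝ is closed, and Ω is non-degenerate if and only if b ≠ 0 and ℓ ≠ 0. -/

import Mathlib

open ExteriorAlgebra

/-- Standard basis vector of `Fin 6 → ℝ`. -/
noncomputable def E (i : Fin 6) : Fin 6 → ℝ := Pi.single i 1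

namespace H6Aux

noncomputable def x (i : Fin 6) : ExteriorAlgebra ℝ (Fin 6 → ℝ) := ι ℝ (E i)

lemma sq (i : Fin 6) : x i * x i = 0 := ι_sq_zero _

lemma sq' (i : Fin 6) (t : ExteriorAlgebra ℝ (Fin 6 → ℝ)) : x i * (x i * t) = 0 := by
  rw [← mul_assoc, sq, zero_mul]

lemma swap (i j : Fin 6) : x j * x i = -(x i * x j) :=
  eq_neg_of_add_eq_zero_right (ι_add_mul_swap (E i) (E j))

lemma swap' (i j : Fin 6) (t : ExteriorAlgebra ℝ (Fin 6 → ℝ)) :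
    x j * (x i * t) = -(x i * (x j * t)) := by
  rw [← mul_assoc, swap, neg_mul, mul_assoc]

noncomputable def F : ∀ i : ℕ, (Fin 6 → ℝ) [⋀^Fin i]→ₗ[ℝ] ℝ :=
  Function.update (fun i => (0 : (Fin 6 → ℝ) [⋀^Fin i]→ₗ[ℝ] ℝ)) 6
    (Matrix.detRowAlternating : (Fin 6 → ℝ) [⋀^Fin 6]→ₗ[ℝ] ℝ)

lemma F6 : F 6 E = 1 := by
  rw [F, Function.update_self]
  show Matrix.det E = 1
  have h : E = (1 : Matrix (Fin 6) (Fin 6) ℝ) := by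
    ext i j
    simp [E, Matrix.one_apply, Pi.single_apply, eq_comm]
  rw [h, Matrix.det_one]

lemma hmulti : ιMulti ℝ 6 E = x 0 * (x 1 * (x 2 * (x 3 * (x 4 * x 5)))) := by
  rw [ιMulti_apply]
  simp [List.ofFn_succ, x]

lemma top_ne : x 0 * (x 1 * (x 2 * (x 3 * (x 4 * x 5)))) ≠ 0 := by
  intro h
  have h2 := liftAlternating_apply_ιMulti (R := ℝ) F E
  rw [hmulti, h, map_zero, F6] at h2
  exact one_ne_zero h2.symm

set_option maxHeartbeats 2000000 in
lemma cube (a b c k ℓ : ℝ) :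
    (a • (x 1 * x 2) + b • (x 0 * x 3) + c • (x 0 * x 1 - x 2 * x 3) -
      k • (x 0 * x 2 + x 1 * x 3) + ℓ • (x 1 * x 4 + x 2 * x 5)) ^ 3 =
    (-6*b*ℓ^2) • (x 0 * (x 1 * (x 2 * (x 3 * (x 4 * x 5))))) := by
  rw [pow_succ, pow_succ, pow_one]
  simp only [mul_add, add_mul, mul_sub, sub_mul, smul_mul_assoc, mul_smul_comm, mul_neg,
    neg_mul, smul_neg, neg_neg, mul_assoc,
    sq, sq', zero_mul, mul_zero, smul_zero, add_zero, zero_add, neg_zero, sub_zero, zero_sub,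
    swap 0 1, swap 0 2, swap 0 3, swap 0 4, swap 0 5, swap 1 2, swap 1 3, swap 1 4, swap 1 5,
    swap 2 3, swap 2 4, swap 2 5, swap 3 4, swap 3 5, swap 4 5,
    swap' 0 1, swap' 0 2, swap' 0 3, swap' 0 4, swap' 0 5, swap' 1 2, swap' 1 3, swap' 1 4,
    swap' 1 5, swap' 2 3, swap' 2 4, swap' 2 5, swap' 3 4, swap' 3 5, swap' 4 5]
  module

lemma x_def (i : Fin 6) : ι ℝ (E i) = x i := rfl

end H6Aux

open H6Aux in
/-- On the Lie algebra `h₆` with structure equations `de⁵ = e¹∧e²`, `de⁶ = e¹∧e³`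
(all other `de^i = 0`), every 2-form of the shape
`Ω = a e²∧e³ + b e¹∧e⁴ + c(e¹∧e²-e³∧e⁴) - k(e¹∧e³+e²∧e⁴) + ℓ(e²∧e⁵+e³∧e⁶)`
is closed, and `Ω` is non-degenerate (`Ω∧Ω∧Ω ≠ 0`) if and only if `b ≠ 0` and `ℓ ≠ 0`. -/
theorem h6_one_one_forms_closed_and_nondegeneracy
    (a b c k ℓ : ℝ)
    (δ : ExteriorAlgebra ℝ (Fin 6 → ℝ) →ₗ[ℝ] ExteriorAlgebra ℝ (Fin 6 → ℝ))
    (hder : ∀ (w : Fin 6 → ℝ) (z : ExteriorAlgebra ℝ (Fin 6 → ℝ)),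
      δ (ι ℝ w * z) = δ (ι ℝ w) * z - ι ℝ w * δ z)
    (hδ : ∀ i : Fin 6, i ≠ 4 → i ≠ 5 → δ (ι ℝ (E i)) = 0)
    (hδ5 : δ (ι ℝ (E 4)) = ι ℝ (E 0) * ι ℝ (E 1))
    (hδ6 : δ (ι ℝ (E 5)) = ι ℝ (E 0) * ι ℝ (E 2)) :
    δ (a • (ι ℝ (E 1) * ι ℝ (E 2)) + b • (ι ℝ (E 0) * ι ℝ (E 3)) +
        c • (ι ℝ (E 0) * ι ℝ (E 1) - ι ℝ (E 2) * ι ℝ (E 3)) -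
        k • (ι ℝ (E 0) * ι ℝ (E 2) + ι ℝ (E 1) * ι ℝ (E 3)) +
        ℓ • (ι ℝ (E 1) * ι ℝ (E 4) + ι ℝ (E 2) * ι ℝ (E 5))) = 0 ∧
    ((a • (ι ℝ (E 1) * ι ℝ (E 2)) + b • (ι ℝ (E 0) * ι ℝ (E 3)) +
        c • (ι ℝ (E 0) * ι ℝ (E 1) - ι ℝ (E 2) * ι ℝ (E 3)) -
        k • (ι ℝ (E 0) * ι ℝ (E 2) + ι ℝ (E 1) * ι ℝ (E 3)) +
        ℓ • (ι ℝ (E 1) * ι ℝ (E 4) + ι ℝ (E 2) * ι ℝ (E 5))) ^ 3 ≠ 0 ↔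
      (b ≠ 0 ∧ ℓ ≠ 0)) := by
  have h0 := hδ 0 (by decide) (by decide)
  have h1 := hδ 1 (by decide) (by decide)
  have h2 := hδ 2 (by decide) (by decide)
  have h3 := hδ 3 (by decide) (by decide)
  constructor
  · simp only [map_add, map_sub, map_smul, hder, h0, h1, h2, h3, hδ5, hδ6, zero_mul,
      zero_sub, sub_zero, sub_self, neg_zero, smul_zero, add_zero, zero_add]
    simp only [x_def, swap', sq', sq, neg_neg, neg_zero, smul_zero, mul_zero, sub_self,
      add_zero, zero_add, zero_sub, smul_neg, sub_zero]
  · simp only [x_def]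
    rw [cube a b c k ℓ]
    rw [ne_eq, smul_eq_zero, not_or]
    simp only [top_ne, not_false_iff, and_true]
    constructor
    · intro h
      exact ⟨fun hb => h (by rw [hb]; ring), fun hl => h (by rw [hl]; ring)⟩
    · rintro ⟨hb, hl⟩ h
      rcases mul_eq_zero.1 h with h' | h'
      · rcases mul_eq_zero.1 h' with h'' | h''
        · norm_num at h''
        · exact hb h''
      · exact hl (pow_eq_zero_iff (by norm_num) |>.1 h')
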